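/- If two bounded measurable functions ξ¹ and ξ² both solve the integral equation ∫ ξ(x) f(x,y) dν(x_mis) = g(x_obs, y) for all (x_obs, y), where f is a nonnegative kernel that is bounded complete in y (i.e., for any bounded measurable h, ∫ h(x) f(x,y) dν(x) = 0 for a.e. y implies h = 0 a.e.), then ξ¹ = ξ² almost everywhere. -/

import Mathlib

open MeasureTheory

/-- Uniqueness of bounded solutions to the integral equation
`∫ ξ(x) f(x,y) dν(x_mis) = g(x_obs, y)` when the kernel `f` is bounded complete in `y`. -/
theorem unique_solution_of_boundedComplete
    {O M Y : Type*} [MeasurableSpace O] [MeasurableSpace M] [MeasurableSpace Y]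
    (νO : Measure O) (νM : Measure M) (μY : Measure Y)
    [SigmaFinite νO] [SigmaFinite νM]
    (f : O × M → Y → ℝ) (g : O → Y → ℝ)
    (hf_nonneg : ∀ x y, 0 ≤ f x y)
    (hf_meas : Measurable fun p : (O × M) × Y => f p.1 p.2)
    (hf_int : ∀ y, Integrable (fun x => f x y) (νO.prod νM))
    (hcomplete : ∀ h : O × M → ℝ, Measurable h → (∃ C, ∀ x, |h x| ≤ C) →
      (∀ᵐ y ∂μY, ∫ x, h x * f x y ∂(νO.prod νM) = 0) →
      h =ᵐ[νO.prod νM] 0)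
    (ξ₁ ξ₂ : O × M → ℝ)
    (hξ₁m : Measurable ξ₁) (hξ₂m : Measurable ξ₂)
    (hξ₁b : ∃ C, ∀ x, |ξ₁ x| ≤ C) (hξ₂b : ∃ C, ∀ x, |ξ₂ x| ≤ C)
    (heq₁ : ∀ o y, ∫ m, ξ₁ (o, m) * f (o, m) y ∂νM = g o y)
    (heq₂ : ∀ o y, ∫ m, ξ₂ (o, m) * f (o, m) y ∂νM = g o y) :
    ξ₁ =ᵐ[νO.prod νM] ξ₂ := by
  obtain ⟨C₁, hC₁⟩ := hξ₁b
  obtain ⟨C₂, hC₂⟩ := hξ₂b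
  have hmeas_fy : ∀ y : Y, Measurable fun x : O × M => f x y := fun y =>
    hf_meas.comp (measurable_id.prodMk measurable_const)
  have hint₁ : ∀ y, Integrable (fun x => ξ₁ x * f x y) (νO.prod νM) := fun y =>
    (hf_int y).bdd_mul hξ₁m.aestronglyMeasurable (c := C₁) (Filter.Eventually.of_forall fun x => by simpa using hC₁ x)
  have hint₂ : ∀ y, Integrable (fun x => ξ₂ x * f x y) (νO.prod νM) := fun y =>
    (hf_int y).bdd_mul hξ₂m.aestronglyMeasurable (c := C₂) (Filter.Eventually.of_forall fun x => by simpa using hC₂ x)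
  have key : ξ₁ - ξ₂ =ᵐ[νO.prod νM] 0 := by
    apply hcomplete _ (hξ₁m.sub hξ₂m) ⟨C₁ + C₂, fun x => by
      have := hC₁ x; have := hC₂ x
      calc |ξ₁ x - ξ₂ x| ≤ |ξ₁ x| + |ξ₂ x| := abs_sub _ _
        _ ≤ C₁ + C₂ := by linarith⟩
    filter_upwards with y
    have h1 : ∫ x, (ξ₁ x - ξ₂ x) * f x y ∂(νO.prod νM)
        = (∫ x, ξ₁ x * f x y ∂(νO.prod νM)) - ∫ x, ξ₂ x * f x y ∂(νO.prod νM) := by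
      rw [← integral_sub (hint₁ y) (hint₂ y)]
      congr 1
      ext x
      ring
    simp only [Pi.sub_apply]
    rw [h1]
    rw [integral_prod _ (hint₁ y), integral_prod _ (hint₂ y)]
    have : ∀ o : O, (∫ m, ξ₁ (o, m) * f (o, m) y ∂νM)
        = ∫ m, ξ₂ (o, m) * f (o, m) y ∂νM := fun o => by rw [heq₁ o y, heq₂ o y]
    simp [this]
  filter_upwards [key] with x hx
  have : ξ₁ x - ξ₂ x = 0 := hx
  linarith
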